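/- arXiv:1705.03108 — 2 statements merged into one kernel-verified Lean document; each statement's English description precedes it below -/
import Mathlib

section
/- Let D be a combinatorial knot diagram (i.e., its strand set S is connected under adjacency) with n ≥ 2 strands, suppose D is k-meridionally colorable with k ≥ 2 via a sequence of coloring moves with final coloring f : S → {1,…,k}, and let h be the height function of the associated coloring sequence. Then for every color j ∈ {1,…,k}, the color class f^{-1}(j) can be ordered as a sequence t₁,…,t_a in which consecutive strands are adjacent, and in any such ordering the function i ↦ h(t_i) has a unique local maximum; this local maximum occurs at the seed strand of color j. -/
/-- A combinatorial link diagram: `n` strands and `n` crossings; each crossing has an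
(unordered, here recorded as ordered) pair of understrands and an overstrand; every
strand occurs as an understrand of exactly two crossings, counted with multiplicity. -/
structure LinkDiagram where
  n : ℕ
  Strand : Type
  Crossing : Type
  [strandFintype : Fintype Strand]
  [strandDecEq : DecidableEq Strand]
  [crossingFintype : Fintype Crossing]
  card_strand : Fintype.card Strand = n
  card_crossing : Fintype.card Crossing = n
  under1 : Crossing → Strand
  under2 : Crossing → Strand
  overStrand : Crossing → Strand
  under_twice : ∀ s : Strand,
    Nat.card {c : Crossing // under1 c = s} + Nat.card {c : Crossing // under2 c = s} = 2

attribute [instance] LinkDiagram.strandFintype LinkDiagram.strandDecEq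
  LinkDiagram.crossingFintype

namespace LinkDiagram

/-- Two strands are adjacent if they are the two understrands of a common crossing. -/
def Adj (D : LinkDiagram) (s t : D.Strand) : Prop :=
  ∃ c : D.Crossing, (D.under1 c = s ∧ D.under2 c = t) ∨ (D.under1 c = t ∧ D.under2 c = s)

/-- A subset `B` of the strands is connected if any two of its elements are joined by a
path of adjacent strands lying within `B`. -/
def ConnectedIn (D : LinkDiagram) (B : Set D.Strand) : Prop :=
  ∀ s ∈ B, ∀ t ∈ B,
    Relation.ReflTransGen (fun a b => a ∈ B ∧ b ∈ B ∧ D.Adj a b) s t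

/-- The connected component (under adjacency) of the strand `s`. -/
def component (D : LinkDiagram) (s : D.Strand) : Set D.Strand :=
  {t | Relation.ReflTransGen D.Adj s t}

/-- A witness that `D` is `k`-meridionally colorable: `k` distinct seed strands, partial
colorings `f i` at each stage `i = 0, …, n-k` (a strand not yet colored has value `none`),
where stage `0` colors the seed `j` with color `j` and nothing else, and each stage
`i → i+1` is a coloring move assigning a color to the single new strand `newStrand i`:
it is an understrand at a crossing whose other understrand and overstrand are already
colored, and it receives the color of the other understrand.  At the final stage
`n - k`, every strand is colored. -/
structure ColoringProcess (D : LinkDiagram) (k : ℕ) where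
  seed : Fin k → D.Strand
  seed_inj : Function.Injective seed
  f : ℕ → D.Strand → Option (Fin k)
  newStrand : ℕ → D.Strand
  f0_seed : ∀ j : Fin k, f 0 (seed j) = some j
  f0_none : ∀ s : D.Strand, (∀ j : Fin k, seed j ≠ s) → f 0 s = none
  move_none : ∀ i < D.n - k, f i (newStrand i) = none
  move_eq : ∀ i < D.n - k, ∀ s : D.Strand, s ≠ newStrand i → f (i + 1) s = f i s
  move_adj : ∀ i < D.n - k, ∃ c : D.Crossing, ∃ si : D.Strand,
      ((D.under1 c = newStrand i ∧ D.under2 c = si) ∨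
        (D.under1 c = si ∧ D.under2 c = newStrand i)) ∧
      (f i si).isSome ∧ (f i (D.overStrand c)).isSome ∧
      f (i + 1) (newStrand i) = f i si
  final : ∀ s : D.Strand, (f (D.n - k) s).isSome

/-- The final coloring of a coloring process. -/
def ColoringProcess.final' {D : LinkDiagram} {k : ℕ} (p : ColoringProcess D k) :
    D.Strand → Option (Fin k) :=
  p.f (D.n - k)

/-- `h` is the height function of the coloring sequence associated to the process `p`:
the `j`-th seed (j = 1, …, k) has height `-j`, and the strand colored by the `i`-th
coloring move has height `-(k + i)`. -/
def IsHeightFunction {D : LinkDiagram} {k : ℕ} (p : ColoringProcess D k)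
    (h : D.Strand → ℤ) : Prop :=
  (∀ j : Fin k, h (p.seed j) = -((j : ℕ) + 1 : ℤ)) ∧
  (∀ i < D.n - k, h (p.newStrand i) = -((k : ℤ) + (i : ℕ) + 1))

end LinkDiagram

namespace LinkDiagram

/-- `t : Fin a → Strand` is an ordering of the set `C` as a sequence in which consecutive
strands are adjacent. -/
def IsPathOrdering (D : LinkDiagram) (C : Set D.Strand) (a : ℕ) (t : Fin a → D.Strand) :
    Prop :=
  Function.Injective t ∧ Set.range t = C ∧
    ∀ i : Fin a, ∀ hi : (i : ℕ) + 1 < a, D.Adj (t i) (t ⟨(i : ℕ) + 1, hi⟩)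

/-- `hgt` has a local maximum at position `m` of the ordering `t`: the value at `m` is
greater than the value at each neighbouring position. -/
def IsPathLocalMax (D : LinkDiagram) (hgt : D.Strand → ℤ) (a : ℕ) (t : Fin a → D.Strand)
    (m : Fin a) : Prop :=
  (∀ hm : (m : ℕ) + 1 < a, hgt (t ⟨(m : ℕ) + 1, hm⟩) < hgt (t m)) ∧
  (0 < (m : ℕ) →
    hgt (t ⟨(m : ℕ) - 1, lt_of_le_of_lt (Nat.sub_le _ _) m.isLt⟩) < hgt (t m))

end LinkDiagram
namespace LinkDiagram

/-- No three distinct crossings all have `s` as an understrand. -/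
lemma no_three_crossings (D : LinkDiagram) (s : D.Strand) (c1 c2 c3 : D.Crossing)
    (h12 : c1 ≠ c2) (h13 : c1 ≠ c3) (h23 : c2 ≠ c3)
    (H1 : D.under1 c1 = s ∨ D.under2 c1 = s)
    (H2 : D.under1 c2 = s ∨ D.under2 c2 = s)
    (H3 : D.under1 c3 = s ∨ D.under2 c3 = s) : False := by
  classical
  have key := D.under_twice s
  rw [Nat.card_eq_fintype_card, Nat.card_eq_fintype_card,
    Fintype.card_subtype, Fintype.card_subtype] at key
  set A := Finset.filter (fun c => D.under1 c = s) Finset.univ with hA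
  set B := Finset.filter (fun c => D.under2 c = s) Finset.univ with hB
  have hsub : ({c1, c2, c3} : Finset D.Crossing) ⊆ A ∪ B := by
    intro c hc
    simp only [Finset.mem_insert, Finset.mem_singleton] at hc
    simp only [hA, hB, Finset.mem_union, Finset.mem_filter, Finset.mem_univ, true_and]
    rcases hc with rfl | rfl | rfl <;> assumption
  have h3 : ({c1, c2, c3} : Finset D.Crossing).card = 3 := by
    rw [Finset.card_insert_of_notMem, Finset.card_insert_of_notMem,
      Finset.card_singleton]
    · simp [h23]
    · simp [h12, h13]
  have := Finset.card_le_card hsub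
  have := Finset.card_union_le A B
  omega

/-- Degree bound: a strand cannot be adjacent to three distinct other strands. -/
lemma no_three_neighbors (D : LinkDiagram) (s u v w : D.Strand)
    (huv : u ≠ v) (huw : u ≠ w) (hvw : v ≠ w)
    (hus : u ≠ s) (hvs : v ≠ s) (hws : w ≠ s)
    (hu : D.Adj s u) (hv : D.Adj s v) (hw : D.Adj s w) : False := by
  obtain ⟨cu, hcu⟩ := hu
  obtain ⟨cv, hcv⟩ := hv
  obtain ⟨cw, hcw⟩ := hw
  have hne : ∀ (c c' : D.Crossing) (x y : D.Strand), x ≠ y → x ≠ s → y ≠ s →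
      ((D.under1 c = s ∧ D.under2 c = x) ∨ (D.under1 c = x ∧ D.under2 c = s)) →
      ((D.under1 c' = s ∧ D.under2 c' = y) ∨ (D.under1 c' = y ∧ D.under2 c' = s)) →
      c ≠ c' := by
    rintro c c' x y hxy hxs hys h h' rfl
    rcases h with ⟨h1, h2⟩ | ⟨h1, h2⟩ <;> rcases h' with ⟨h3, h4⟩ | ⟨h3, h4⟩ <;> simp_all
  exact D.no_three_crossings s cu cv cw
    (hne cu cv u v huv hus hvs hcu hcv)
    (hne cu cw u w huw hus hws hcu hcw)
    (hne cv cw v w hvw hvs hws hcv hcw)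
    (by rcases hcu with ⟨h1, _⟩ | ⟨_, h2⟩ <;> [exact Or.inl h1; exact Or.inr h2])
    (by rcases hcv with ⟨h1, _⟩ | ⟨_, h2⟩ <;> [exact Or.inl h1; exact Or.inr h2])
    (by rcases hcw with ⟨h1, _⟩ | ⟨_, h2⟩ <;> [exact Or.inl h1; exact Or.inr h2])

/-- If a strand `s` is adjacent (via crossings) to two distinct strands `u v ≠ s`,
then any strand adjacent to `s` is `s`, `u` or `v`. -/
lemma adj_closure (D : LinkDiagram) (s u v : D.Strand)
    (huv : u ≠ v) (hus : u ≠ s) (hvs : v ≠ s)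
    (hu : D.Adj s u) (hv : D.Adj s v) :
    ∀ w, D.Adj s w → w = s ∨ w = u ∨ w = v := by
  intro w hw
  by_contra hcon
  push_neg at hcon
  obtain ⟨hws, hwu, hwv⟩ := hcon
  exact D.no_three_neighbors s u v w huv hwu.symm hwv.symm hus hvs hws hu hv hw

lemma adj_symm (D : LinkDiagram) {s t : D.Strand} (h : D.Adj s t) : D.Adj t s := by
  obtain ⟨c, hc⟩ := h
  exact ⟨c, hc.symm⟩

end LinkDiagram
namespace LinkDiagram
namespace ColoringProcess

variable {D : LinkDiagram} {k : ℕ} (p : ColoringProcess D k)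

lemma persist : ∀ {i i' : ℕ}, i ≤ i' → i' ≤ D.n - k → ∀ {s : D.Strand} {c : Fin k},
    p.f i s = some c → p.f i' s = some c := by
  intro i i' hii' hi's s c hc
  induction i' , hii' using Nat.le_induction with
  | base => exact hc
  | succ m hm ih =>
    have hmlt : m < D.n - k := by omega
    have ihm := ih (by omega)
    by_cases hs : s = p.newStrand m
    · have := p.move_none m hmlt
      rw [hs] at ihm
      rw [this] at ihm
      exact absurd ihm (by simp)
    · rw [p.move_eq m hmlt s hs]; exact ihm

lemma final'_seed (j : Fin k) : p.final' (p.seed j) = some j :=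
  p.persist (Nat.zero_le _) le_rfl (p.f0_seed j)

lemma stage_cases : ∀ i ≤ D.n - k, ∀ s : D.Strand, (p.f i s).isSome →
    (∃ j' : Fin k, s = p.seed j') ∨ ∃ i' < i, s = p.newStrand i' := by
  intro i
  induction i with
  | zero =>
    intro _ s hs
    left
    by_contra hcon
    push_neg at hcon
    have := p.f0_none s (fun j' => fun he => hcon j' he.symm)
    rw [this] at hs; simp at hs
  | succ m ih =>
    intro hm s hs
    have hmlt : m < D.n - k := by omega
    by_cases hsm : s = p.newStrand m
    · exact Or.inr ⟨m, by omega, hsm⟩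
    · rw [p.move_eq m hmlt s hsm] at hs
      rcases ih (by omega) s hs with h | ⟨i', hi', he⟩
      · exact Or.inl h
      · exact Or.inr ⟨i', by omega, he⟩

lemma strand_cases (s : D.Strand) :
    (∃ j' : Fin k, s = p.seed j') ∨ ∃ i' < D.n - k, s = p.newStrand i' :=
  p.stage_cases (D.n - k) le_rfl s (p.final s)

lemma newStrand_ne_seed {i : ℕ} (hi : i < D.n - k) (j' : Fin k) :
    p.newStrand i ≠ p.seed j' := by
  intro he
  have h1 := p.move_none i hi
  have h2 : p.f i (p.seed j') = some j' := p.persist (Nat.zero_le _) (by omega) (p.f0_seed j')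
  rw [he, h2] at h1; simp at h1

lemma newStrand_inj {i i' : ℕ} (hi : i < D.n - k) (hi' : i' < i) :
    p.newStrand i ≠ p.newStrand i' := by
  intro he
  obtain ⟨c, si, hadj, hsi, hov, hmove⟩ := p.move_adj i' (by omega)
  obtain ⟨ci, hci⟩ := Option.isSome_iff_exists.mp hsi
  have h2 : p.f i (p.newStrand i') = some ci := by
    have : p.f (i' + 1) (p.newStrand i') = some ci := by rw [hmove, hci]
    exact p.persist (by omega) (by omega) this
  have h1 := p.move_none i hi
  rw [he, h2] at h1; simp at h1

variable {h : D.Strand → ℤ}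

lemma h_seed (hh : IsHeightFunction p h) (j' : Fin k) : h (p.seed j') = -((j' : ℕ) + 1 : ℤ) := hh.1 j'

lemma h_new (hh : IsHeightFunction p h) {i : ℕ} (hi : i < D.n - k) :
    h (p.newStrand i) = -((k : ℤ) + (i : ℕ) + 1) := hh.2 i hi

lemma h_new_lt_seed (hh : IsHeightFunction p h) {i : ℕ} (hi : i < D.n - k) (j' : Fin k) :
    h (p.newStrand i) < h (p.seed j') := by
  rw [p.h_new hh hi, p.h_seed hh j']
  have : (j' : ℕ) < k := j'.isLt
  push_cast
  omega

lemma h_new_lt_new (hh : IsHeightFunction p h) {i i' : ℕ} (hi : i < D.n - k) (hi' : i' < i) :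
    h (p.newStrand i) < h (p.newStrand i') := by
  rw [p.h_new hh hi, p.h_new hh (by omega)]
  push_cast
  omega

lemma h_inj (hh : IsHeightFunction p h) : Function.Injective h := by
  intro s s' he
  rcases p.strand_cases s with ⟨j1, rfl⟩ | ⟨i1, hi1, rfl⟩ <;>
    rcases p.strand_cases s' with ⟨j2, rfl⟩ | ⟨i2, hi2, rfl⟩
  · rw [p.h_seed hh, p.h_seed hh] at he
    have : (j1 : ℕ) = (j2 : ℕ) := by push_cast at he; omega
    exact congrArg p.seed (Fin.ext this)
  · rw [p.h_seed hh, p.h_new hh hi2] at he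
    have : (j1 : ℕ) < k := j1.isLt
    push_cast at he; omega
  · rw [p.h_new hh hi1, p.h_seed hh] at he
    have : (j2 : ℕ) < k := j2.isLt
    push_cast at he; omega
  · rw [p.h_new hh hi1, p.h_new hh hi2] at he
    have : i1 = i2 := by push_cast at he; omega
    rw [this]

/-- The parent of a newly coloured strand of colour `j`. -/
lemma parent_new (hh : IsHeightFunction p h) {j : Fin k} {i : ℕ} (hi : i < D.n - k)
    (hcol : p.final' (p.newStrand i) = some j) :
    ∃ pr : D.Strand, p.final' pr = some j ∧ D.Adj (p.newStrand i) pr ∧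
      h (p.newStrand i) < h pr ∧
      (pr = p.seed j ∨ ∃ i' < i, pr = p.newStrand i') := by
  obtain ⟨c, si, hadj, hsi, hov, hmove⟩ := p.move_adj i hi
  obtain ⟨ci, hci⟩ := Option.isSome_iff_exists.mp hsi
  have hnew1 : p.f (i + 1) (p.newStrand i) = some ci := by rw [hmove, hci]
  have hfin : p.final' (p.newStrand i) = some ci := p.persist (by omega) le_rfl hnew1
  have hcij : ci = j := by rw [hfin] at hcol; exact Option.some_injective _ hcol
  subst hcij
  have hfinsi : p.final' si = some ci := p.persist (by omega) le_rfl hci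
  have hAdj : D.Adj (p.newStrand i) si := ⟨c, hadj⟩
  rcases p.stage_cases i (by omega) si hsi with ⟨j'', hj''⟩ | ⟨i', hi'i, hi'e⟩
  · have : p.f i (p.seed j'') = some j'' :=
      p.persist (Nat.zero_le _) (by omega) (p.f0_seed j'')
    rw [hj''] at hci
    rw [this] at hci
    have : j'' = ci := Option.some_injective _ hci
    subst this
    exact ⟨si, hfinsi, hAdj, by rw [hj'']; exact p.h_new_lt_seed hh hi _, Or.inl hj''⟩
  · refine ⟨si, hfinsi, hAdj, ?_, Or.inr ⟨i', hi'i, hi'e⟩⟩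
    rw [hi'e]
    exact p.h_new_lt_new hh hi hi'i

lemma reach_seed_aux (hh : IsHeightFunction p h) (j : Fin k) :
    ∀ i, i < D.n - k → p.final' (p.newStrand i) = some j →
    h (p.newStrand i) < h (p.seed j) ∧
      Relation.ReflTransGen
        (fun a b => p.final' a = some j ∧ p.final' b = some j ∧ D.Adj a b)
        (p.newStrand i) (p.seed j) := by
  intro i
  induction i using Nat.strong_induction_on with
  | _ i ih =>
    intro hi hcol
    obtain ⟨pr, hprcol, hadj, hlt, hcase⟩ := p.parent_new hh hi hcol
    rcases hcase with rfl | ⟨i', hi'i, rfl⟩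
    · exact ⟨hlt, Relation.ReflTransGen.single ⟨hcol, hprcol, hadj⟩⟩
    · obtain ⟨hlt', hchain⟩ := ih i' hi'i (by omega) hprcol
      exact ⟨lt_trans hlt hlt',
        Relation.ReflTransGen.head ⟨hcol, hprcol, hadj⟩ hchain⟩

lemma reach_seed (hh : IsHeightFunction p h) (j : Fin k) {s : D.Strand}
    (hcol : p.final' s = some j) :
    (s = p.seed j ∨ h s < h (p.seed j)) ∧
      Relation.ReflTransGen
        (fun a b => p.final' a = some j ∧ p.final' b = some j ∧ D.Adj a b)
        s (p.seed j) := by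
  rcases p.strand_cases s with ⟨j', rfl⟩ | ⟨i, hi, rfl⟩
  · have := p.final'_seed j'
    rw [hcol] at this
    have : j = j' := Option.some_injective _ this
    subst this
    exact ⟨Or.inl rfl, Relation.ReflTransGen.refl⟩
  · obtain ⟨h1, h2⟩ := p.reach_seed_aux hh j i hi hcol
    exact ⟨Or.inr h1, h2⟩

/-- Every non-seed strand of colour `j` has a neighbour of colour `j` with larger
height. -/
lemma parent (hh : IsHeightFunction p h) (j : Fin k) {s : D.Strand}
    (hcol : p.final' s = some j) (hns : s ≠ p.seed j) :
    ∃ pr : D.Strand, p.final' pr = some j ∧ D.Adj s pr ∧ h s < h pr := by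
  rcases p.strand_cases s with ⟨j', rfl⟩ | ⟨i, hi, rfl⟩
  · have := p.final'_seed j'
    rw [hcol] at this
    have : j = j' := Option.some_injective _ this
    subst this
    exact absurd rfl hns
  · obtain ⟨pr, h1, h2, h3, _⟩ := p.parent_new hh hi hcol
    exact ⟨pr, h1, h2, h3⟩

lemma h_lt_seed (hh : IsHeightFunction p h) (j : Fin k) {s : D.Strand}
    (hcol : p.final' s = some j) (hns : s ≠ p.seed j) : h s < h (p.seed j) := by
  rcases (p.reach_seed hh j hcol).1 with rfl | hlt
  · exact absurd rfl hns
  · exact hlt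

end ColoringProcess
end LinkDiagram

namespace LinkDiagram

/-- A connected (to a base point) set of strands in a link diagram can be ordered as a
path, by taking a maximal injective adjacency-path. -/
lemma exists_path_ordering (D : LinkDiagram) (C : Set D.Strand) (s0 : D.Strand)
    (hs0 : s0 ∈ C)
    (hconn : ∀ s ∈ C,
      Relation.ReflTransGen (fun a b => a ∈ C ∧ b ∈ C ∧ D.Adj a b) s s0) :
    ∃ (a : ℕ) (t : Fin a → D.Strand), D.IsPathOrdering C a t := by
  classical
  set P : ℕ → Prop := fun a => ∃ t : Fin a → D.Strand, Function.Injective t ∧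
    (∀ i, t i ∈ C) ∧ s0 ∈ Set.range t ∧
    (∀ i : Fin a, ∀ hi : (i : ℕ) + 1 < a, D.Adj (t i) (t ⟨(i : ℕ) + 1, hi⟩)) with hP
  have hP1 : P 1 := by
    refine ⟨fun _ => s0, fun i1 i2 _ => Subsingleton.elim i1 i2, fun _ => hs0,
      ⟨0, rfl⟩, fun i hi => absurd hi (by omega)⟩
  have hbound : ∀ a, P a → a ≤ Fintype.card D.Strand := by
    rintro a ⟨t, ht, -⟩
    simpa using Fintype.card_le_of_injective t ht
  set N := Fintype.card D.Strand with hN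
  have hN1 : 1 ≤ N := hbound 1 hP1
  set a := Nat.findGreatest P N with ha
  have hPa : P a := Nat.findGreatest_spec hN1 hP1
  have hmax : ¬ P (a + 1) := fun hp =>
    Nat.findGreatest_is_greatest (by omega) (hbound _ hp) hp
  obtain ⟨t, htinj, htC, hts0, htchain⟩ := hPa
  refine ⟨a, t, htinj, ?_, htchain⟩
  apply Set.eq_of_subset_of_subset
  · rintro x ⟨i, rfl⟩; exact htC i
  · intro s hs
    by_contra hsnot
    have key : s ∈ Set.range t ∨
        ∃ u v, u ∈ C ∧ u ∉ Set.range t ∧ v ∈ Set.range t ∧ D.Adj u v := by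
      refine Relation.ReflTransGen.head_induction_on (hconn s hs) (Or.inl hts0) ?_
      rintro x c ⟨hxC, hcC, hxc⟩ hrtg ih
      by_cases hx : x ∈ Set.range t
      · exact Or.inl hx
      · rcases ih with hc | hfound
        · exact Or.inr ⟨x, c, hxC, hx, hc, hxc⟩
        · exact Or.inr hfound
    rcases key with hmem | ⟨u, v, huC, hunot, ⟨q, hqv⟩, huv⟩
    · exact hsnot hmem
    · clear hsnot hs s
      by_cases h1 : (q : ℕ) + 1 < a
      · by_cases h0 : 0 < (q : ℕ)
        · -- interior: three neighbours, contradiction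
          have hprev : D.Adj (t q) (t ⟨(q : ℕ) - 1, by omega⟩) := by
            have h2 : (q : ℕ) - 1 + 1 < a := by omega
            have := htchain ⟨(q : ℕ) - 1, by omega⟩ h2
            have he : (⟨(q : ℕ) - 1 + 1, h2⟩ : Fin a) = q :=
              Fin.ext (show (q : ℕ) - 1 + 1 = (q : ℕ) by omega)
            rw [he] at this
            exact D.adj_symm this
          have hnext : D.Adj (t q) (t ⟨(q : ℕ) + 1, h1⟩) := htchain q h1
          have hu : D.Adj (t q) u := by rw [← hqv] at huv; exact D.adj_symm huv
          refine D.no_three_neighbors (t q) (t ⟨(q : ℕ) - 1, by omega⟩)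
            (t ⟨(q : ℕ) + 1, h1⟩) u ?_ ?_ ?_ ?_ ?_ ?_ hprev hnext hu
          · intro he
            have h' : (q : ℕ) - 1 = (q : ℕ) + 1 := congrArg Fin.val (htinj he)
            omega
          · intro he; exact hunot ⟨_, he⟩
          · intro he; exact hunot ⟨_, he⟩
          · intro he
            have h' : (q : ℕ) - 1 = (q : ℕ) := congrArg Fin.val (htinj he)
            omega
          · intro he
            have h' : (q : ℕ) + 1 = (q : ℕ) := congrArg Fin.val (htinj he)
            omega
          · intro he; exact hunot ⟨q, he.symm⟩
        · -- q = 0 : prepend u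
          have hq0 : (q : ℕ) = 0 := by omega
          apply hmax
          refine ⟨fun i => if hi0 : (i : ℕ) = 0 then u else t ⟨(i : ℕ) - 1, by omega⟩,
            ?_, ?_, ?_, ?_⟩
          · intro i1 i2 he
            by_cases e1 : (i1 : ℕ) = 0 <;> by_cases e2 : (i2 : ℕ) = 0 <;>
              simp only [e1, e2, dif_pos, dif_neg, not_false_iff] at he
            · exact Fin.ext (by omega)
            · exact absurd ⟨_, he.symm⟩ hunot
            · exact absurd ⟨_, he⟩ hunot
            · have := htinj he; simp [Fin.ext_iff] at this; exact Fin.ext (by omega)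
          · intro i
            by_cases e : (i : ℕ) = 0 <;> simp only [e, dif_pos, dif_neg, not_false_iff]
            · exact huC
            · exact htC _
          · obtain ⟨q0, hq0'⟩ := hts0
            refine ⟨⟨(q0 : ℕ) + 1, by omega⟩, ?_⟩
            show (if hi0 : (q0 : ℕ) + 1 = 0 then u else t ⟨(q0 : ℕ) + 1 - 1, by omega⟩) = s0
            rw [dif_neg (by omega)]
            have : (⟨(q0 : ℕ) + 1 - 1, by omega⟩ : Fin a) = q0 := Fin.ext (by simp)
            rw [this, hq0']
          · intro i hi
            show D.Adj (if hi0 : (i : ℕ) = 0 then u else t ⟨(i : ℕ) - 1, by omega⟩)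
              (if hi0 : (i : ℕ) + 1 = 0 then u else t ⟨(i : ℕ) + 1 - 1, by omega⟩)
            by_cases e : (i : ℕ) = 0
            · rw [dif_pos e, dif_neg (by omega)]
              have : (⟨(i : ℕ) + 1 - 1, by omega⟩ : Fin a) = q := Fin.ext (by simp [e, hq0])
              rw [this, hqv]
              exact huv
            · rw [dif_neg e, dif_neg (by omega)]
              have h2 : (i : ℕ) - 1 + 1 < a := by simp at hi; omega
              have := htchain ⟨(i : ℕ) - 1, by omega⟩ h2
              have he1 : (⟨(i : ℕ) - 1 + 1, h2⟩ : Fin a) = ⟨(i : ℕ) + 1 - 1, by omega⟩ :=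
                Fin.ext (by simp; omega)
              rw [he1] at this
              exact this
      · -- q = a - 1 : append u
        have hqa : (q : ℕ) + 1 = a := by have := q.isLt; omega
        apply hmax
        refine ⟨fun i => if hi0 : (i : ℕ) < a then t ⟨(i : ℕ), hi0⟩ else u, ?_, ?_, ?_, ?_⟩
        · intro i1 i2 he
          by_cases e1 : (i1 : ℕ) < a <;> by_cases e2 : (i2 : ℕ) < a <;>
            simp only [e1, e2, dif_pos, dif_neg, not_false_iff] at he
          · have := htinj he; simp [Fin.ext_iff] at this; exact Fin.ext (by omega)
          · exact absurd ⟨_, he⟩ hunot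
          · exact absurd ⟨_, he.symm⟩ hunot
          · have := i1.isLt; have := i2.isLt; exact Fin.ext (by omega)
        · intro i
          by_cases e : (i : ℕ) < a <;> simp only [e, dif_pos, dif_neg, not_false_iff]
          · exact htC _
          · exact huC
        · obtain ⟨q0, hq0'⟩ := hts0
          refine ⟨⟨(q0 : ℕ), by omega⟩, ?_⟩
          show (if hi0 : (q0 : ℕ) < a then t ⟨(q0 : ℕ), hi0⟩ else u) = s0
          rw [dif_pos q0.isLt]
          have : (⟨(q0 : ℕ), q0.isLt⟩ : Fin a) = q0 := Fin.ext rfl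
          rw [this, hq0']
        · intro i hi
          show D.Adj (if hi0 : (i : ℕ) < a then t ⟨(i : ℕ), hi0⟩ else u)
            (if hi0 : (i : ℕ) + 1 < a then t ⟨(i : ℕ) + 1, hi0⟩ else u)
          by_cases e : (i : ℕ) + 1 < a
          · rw [dif_pos (by omega : (i : ℕ) < a), dif_pos e]
            exact htchain ⟨(i : ℕ), by omega⟩ e
          · have hia : (i : ℕ) + 1 = a := by omega
            rw [dif_pos (by omega : (i : ℕ) < a), dif_neg e]
            have : (⟨(i : ℕ), by omega⟩ : Fin a) = q :=
              Fin.ext (show (i : ℕ) = (q : ℕ) by omega)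
            rw [this, hqv]
            exact D.adj_symm huv

end LinkDiagram

namespace LinkDiagram

/-- If an injective adjacency path of length `≥ 3` has its endpoints adjacent, then
(by the degree bound) its range is closed under adjacency, hence (by connectivity)
is everything. -/
lemma range_eq_univ_of_cycle (D : LinkDiagram) (hknot : D.ConnectedIn Set.univ)
    {a : ℕ} {t : Fin a → D.Strand} (ha : 3 ≤ a)
    (htinj : Function.Injective t)
    (htchain : ∀ i : Fin a, ∀ hi : (i : ℕ) + 1 < a, D.Adj (t i) (t ⟨(i : ℕ) + 1, hi⟩))
    (hadj : D.Adj (t ⟨0, by omega⟩) (t ⟨a - 1, by omega⟩)) :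
    ∀ s : D.Strand, s ∈ Set.range t := by
  have hne : ∀ (i1 i2 : ℕ) (h1 : i1 < a) (h2 : i2 < a), i1 ≠ i2 →
      t ⟨i1, h1⟩ ≠ t ⟨i2, h2⟩ := by
    intro i1 i2 h1 h2 hne he
    exact hne (congrArg Fin.val (htinj he))
  have closed : ∀ q : Fin a, ∀ w, D.Adj (t q) w → w ∈ Set.range t := by
    rintro ⟨qv, hqlt⟩ w hw
    have hQ : ∃ (v1 v2 : D.Strand), v1 ≠ v2 ∧ v1 ≠ t ⟨qv, hqlt⟩ ∧ v2 ≠ t ⟨qv, hqlt⟩ ∧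
        v1 ∈ Set.range t ∧ v2 ∈ Set.range t ∧
        D.Adj (t ⟨qv, hqlt⟩) v1 ∧ D.Adj (t ⟨qv, hqlt⟩) v2 := by
      by_cases h1 : qv + 1 < a
      · by_cases h0 : 0 < qv
        · -- interior
          have hprev : D.Adj (t ⟨qv, hqlt⟩) (t ⟨qv - 1, by omega⟩) := by
            have h2 : qv - 1 + 1 < a := by omega
            have := htchain ⟨qv - 1, by omega⟩ h2
            have he : (⟨qv - 1 + 1, h2⟩ : Fin a) = ⟨qv, hqlt⟩ :=
              Fin.ext (show qv - 1 + 1 = qv by omega)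
            rw [he] at this
            exact D.adj_symm this
          exact ⟨t ⟨qv - 1, by omega⟩, t ⟨qv + 1, h1⟩,
            hne _ _ _ _ (by omega), hne _ _ _ _ (by omega), hne _ _ _ _ (by omega),
            ⟨_, rfl⟩, ⟨_, rfl⟩, hprev, htchain ⟨qv, hqlt⟩ h1⟩
        · -- q = 0
          have hq0 : qv = 0 := by omega
          refine ⟨t ⟨1, by omega⟩, t ⟨a - 1, by omega⟩,
            hne _ _ _ _ (by omega), hne _ _ _ _ (by omega), hne _ _ _ _ (by omega),
            ⟨_, rfl⟩, ⟨_, rfl⟩, ?_, ?_⟩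
          · have := htchain ⟨0, by omega⟩ (show 0 + 1 < a by omega)
            have he : (⟨qv, hqlt⟩ : Fin a) = ⟨0, by omega⟩ := Fin.ext hq0
            rw [he]
            exact this
          · have he : (⟨qv, hqlt⟩ : Fin a) = ⟨0, by omega⟩ := Fin.ext hq0
            rw [he]
            exact hadj
      · -- q = a - 1
        have hqa : qv = a - 1 := by omega
        have hprev : D.Adj (t ⟨qv, hqlt⟩) (t ⟨a - 2, by omega⟩) := by
          have h2 : a - 2 + 1 < a := by omega
          have := htchain ⟨a - 2, by omega⟩ h2
          have he : (⟨a - 2 + 1, h2⟩ : Fin a) = ⟨qv, hqlt⟩ :=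
            Fin.ext (show a - 2 + 1 = qv by omega)
          rw [he] at this
          exact D.adj_symm this
        refine ⟨t ⟨a - 2, by omega⟩, t ⟨0, by omega⟩,
          hne _ _ _ _ (by omega), hne _ _ _ _ (by omega), hne _ _ _ _ (by omega),
          ⟨_, rfl⟩, ⟨_, rfl⟩, hprev, ?_⟩
        have he : (⟨qv, hqlt⟩ : Fin a) = ⟨a - 1, by omega⟩ := Fin.ext hqa
        rw [he]
        exact D.adj_symm hadj
    obtain ⟨v1, v2, h12, h1q, h2q, hr1, hr2, ha1, ha2⟩ := hQ
    rcases D.adj_closure (t ⟨qv, hqlt⟩) v1 v2 h12 h1q h2q ha1 ha2 w hw with rfl | rfl | rfl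
    · exact ⟨⟨qv, hqlt⟩, rfl⟩
    · exact hr1
    · exact hr2
  intro s
  have hrtg := hknot (t ⟨0, by omega⟩) trivial s trivial
  clear hadj
  induction hrtg with
  | refl => exact ⟨⟨0, by omega⟩, rfl⟩
  | tail hab hbc ih =>
    obtain ⟨q, hq⟩ := ih
    rw [← hq] at hbc
    exact closed q _ hbc.2.2

end LinkDiagram
/-- For a knot diagram (strand set connected under adjacency) with
`n ≥ 2` strands which is `k`-meridionally colorable with `k ≥ 2`, every final color
class can be ordered as a sequence in which consecutive strands are adjacent, and in
any such ordering the height function has a unique local maximum, occurring at the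
seed strand of that color. -/
theorem wirtinger_knot_unique_localMax (D : LinkDiagram)
    (hknot : D.ConnectedIn Set.univ) (hn : 2 ≤ D.n)
    (k : ℕ) (hk : 2 ≤ k) (p : LinkDiagram.ColoringProcess D k)
    (h : D.Strand → ℤ) (hh : LinkDiagram.IsHeightFunction p h) (j : Fin k) :
    (∃ (a : ℕ) (t : Fin a → D.Strand),
        D.IsPathOrdering {s : D.Strand | p.final' s = some j} a t) ∧
    (∀ (a : ℕ) (t : Fin a → D.Strand),
        D.IsPathOrdering {s : D.Strand | p.final' s = some j} a t →
        (∃! m : Fin a, D.IsPathLocalMax h a t m) ∧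
        (∀ m : Fin a, D.IsPathLocalMax h a t m → t m = p.seed j)) := by
  classical
  have hseedC : p.final' (p.seed j) = some j := p.final'_seed j
  have hj' : ∃ j' : Fin k, j' ≠ j := by
    refine ⟨⟨if (j : ℕ) = 0 then 1 else 0, ?_⟩, ?_⟩
    · split_ifs <;> omega
    · intro he
      have := congrArg Fin.val he
      simp only at this
      split_ifs at this with hs <;> omega
  constructor
  · exact D.exists_path_ordering _ (p.seed j) hseedC
      (fun s hs => (p.reach_seed hh j hs).2)
  · rintro a t ⟨htinj, htrange, htchain⟩
    have htC : ∀ i : Fin a, p.final' (t i) = some j := fun i => by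
      have : t i ∈ {s : D.Strand | p.final' s = some j} :=
        htrange ▸ Set.mem_range_self i
      exact this
    obtain ⟨r, hr⟩ : ∃ r, t r = p.seed j := by
      have : p.seed j ∈ Set.range t := by rw [htrange]; exact hseedC
      exact this
    have hcontra : ∀ _ : 3 ≤ a, D.Adj (t ⟨0, by omega⟩) (t ⟨a - 1, by omega⟩) → False := by
      intro ha3 hadj0
      have hall := D.range_eq_univ_of_cycle hknot ha3 htinj htchain hadj0
      obtain ⟨j', hj'⟩ := hj'
      obtain ⟨qq, hqq⟩ := hall (p.seed j')
      have h1 : p.final' (p.seed j') = some j := by rw [← hqq]; exact htC qq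
      have h2 := p.final'_seed j'
      have := h1.symm.trans h2
      exact hj' (Option.some_injective _ this).symm
    have claim : ∀ m : Fin a, D.IsPathLocalMax h a t m → t m = p.seed j := by
      rintro ⟨mv, hmlt⟩ hm
      by_contra hne
      obtain ⟨pr, hprC, hadjpr, hlt⟩ := p.parent hh j (htC _) hne
      obtain ⟨⟨qv, hqlt⟩, hq⟩ : ∃ q, t q = pr := by
        have : pr ∈ Set.range t := by rw [htrange]; exact hprC
        exact this
      have hqm : qv ≠ mv := by
        intro he
        rw [show (⟨qv, hqlt⟩ : Fin a) = ⟨mv, hmlt⟩ from Fin.ext he] at hq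
        rw [hq] at hlt
        exact lt_irrefl _ hlt
      have hqnext : qv ≠ mv + 1 := by
        intro he
        have hlt2 : h (t ⟨mv + 1, by omega⟩) < h (t ⟨mv, hmlt⟩) := hm.1 (show mv + 1 < a by omega)
        rw [show (⟨mv + 1, by omega⟩ : Fin a) = ⟨qv, hqlt⟩ from Fin.ext he.symm, hq] at hlt2
        exact lt_asymm hlt hlt2
      have hqprev : 0 < mv → qv ≠ mv - 1 := by
        intro hm0 he
        have hlt2 : h (t ⟨mv - 1, by omega⟩) < h (t ⟨mv, hmlt⟩) := hm.2 hm0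
        rw [show (⟨mv - 1, by omega⟩ : Fin a) = ⟨qv, hqlt⟩ from Fin.ext he.symm, hq] at hlt2
        exact lt_asymm hlt hlt2
      have hprne : pr ≠ t ⟨mv, hmlt⟩ := by
        intro he
        rw [he] at hlt
        exact lt_irrefl _ hlt
      -- an auxiliary: adjacency to the previous strand along the path
      have hprev : ∀ (iv : ℕ) (hi0 : 0 < iv) (hilt : iv < a),
          D.Adj (t ⟨iv, hilt⟩) (t ⟨iv - 1, by omega⟩) := by
        intro iv hi0 hilt
        have h2 : iv - 1 + 1 < a := by omega
        have := htchain ⟨iv - 1, by omega⟩ h2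
        have he : (⟨iv - 1 + 1, h2⟩ : Fin a) = ⟨iv, hilt⟩ :=
          Fin.ext (show iv - 1 + 1 = iv by omega)
        rw [he] at this
        exact D.adj_symm this
      have hne' : ∀ (i1 i2 : ℕ) (h1 : i1 < a) (h2 : i2 < a), i1 ≠ i2 →
          t ⟨i1, h1⟩ ≠ t ⟨i2, h2⟩ := by
        intro i1 i2 h1 h2 hne he
        exact hne (congrArg Fin.val (htinj he))
      by_cases hm1 : mv + 1 < a
      · by_cases hm0 : 0 < mv
        · -- interior local maximum: three neighbours of `t m`
          have d2 : t ⟨mv - 1, by omega⟩ ≠ pr := by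
            intro he
            have h2 : h (t ⟨mv - 1, by omega⟩) < h (t ⟨mv, hmlt⟩) := hm.2 hm0
            rw [he] at h2
            exact lt_asymm hlt h2
          have d3 : t ⟨mv + 1, hm1⟩ ≠ pr := by
            intro he
            have h2 : h (t ⟨mv + 1, hm1⟩) < h (t ⟨mv, hmlt⟩) := hm.1 hm1
            rw [he] at h2
            exact lt_asymm hlt h2
          exact D.no_three_neighbors (t ⟨mv, hmlt⟩) (t ⟨mv - 1, by omega⟩)
            (t ⟨mv + 1, hm1⟩) pr (hne' _ _ _ _ (by omega)) d2 d3
            (hne' _ _ _ _ (by omega)) (hne' _ _ _ _ (by omega)) hprne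
            (hprev mv hm0 hmlt) (htchain ⟨mv, hmlt⟩ hm1) hadjpr
        · -- `m` is the left endpoint
          have hm0' : mv = 0 := by omega
          have hq2 : 2 ≤ qv := by omega
          have ha3 : 3 ≤ a := by omega
          by_cases hq1 : qv + 1 < a
          · -- `pr` would have three neighbours
            refine D.no_three_neighbors (t ⟨qv, hqlt⟩) (t ⟨qv - 1, by omega⟩)
              (t ⟨qv + 1, hq1⟩) (t ⟨mv, hmlt⟩)
              (hne' _ _ _ _ (by omega)) (hne' _ _ _ _ (by omega))
              (hne' _ _ _ _ (by omega)) (hne' _ _ _ _ (by omega))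
              (hne' _ _ _ _ (by omega)) (hne' _ _ _ _ (by omega))
              (hprev qv (by omega) hqlt) (htchain ⟨qv, hqlt⟩ hq1) ?_
            rw [hq]
            exact D.adj_symm hadjpr
          · -- `pr` is the right endpoint: the path closes into a cycle
            have hqa : qv = a - 1 := by omega
            refine hcontra ha3 ?_
            have he0 : (⟨0, by omega⟩ : Fin a) = ⟨mv, hmlt⟩ := Fin.ext hm0'.symm
            have hea : (⟨a - 1, by omega⟩ : Fin a) = ⟨qv, hqlt⟩ := Fin.ext hqa.symm
            rw [he0, hea, hq]
            exact hadjpr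
      · -- `m` is the right endpoint
        have hma : mv + 1 = a := by omega
        by_cases hm0 : 0 < mv
        · have hq1 : qv + 1 < a := by omega
          by_cases hq0 : 0 < qv
          · refine D.no_three_neighbors (t ⟨qv, hqlt⟩) (t ⟨qv - 1, by omega⟩)
              (t ⟨qv + 1, hq1⟩) (t ⟨mv, hmlt⟩)
              (hne' _ _ _ _ (by omega)) (hne' _ _ _ _ ?_)
              (hne' _ _ _ _ (by omega)) (hne' _ _ _ _ (by omega))
              (hne' _ _ _ _ (by omega)) (hne' _ _ _ _ (by omega))
              (hprev qv hq0 hqlt) (htchain ⟨qv, hqlt⟩ hq1) ?_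
            · have := hqprev hm0
              omega
            · rw [hq]
              exact D.adj_symm hadjpr
          · -- `pr` is the left endpoint: cycle
            have hq0' : qv = 0 := by omega
            have ha3 : 3 ≤ a := by
              have := hqprev hm0
              omega
            refine hcontra ha3 ?_
            have he0 : (⟨0, by omega⟩ : Fin a) = ⟨qv, hqlt⟩ := Fin.ext hq0'.symm
            have hea : (⟨a - 1, by omega⟩ : Fin a) = ⟨mv, hmlt⟩ :=
              Fin.ext (show a - 1 = mv by omega)
            rw [he0, hea, hq]
            exact D.adj_symm hadjpr
        · -- a = 1 : the single strand is the seed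
          have ha1 : a = 1 := by omega
          have : (⟨mv, hmlt⟩ : Fin a) = r := Fin.ext (by have := r.isLt; omega)
          rw [this, hr] at hne
          exact hne rfl
    have hmaxr : D.IsPathLocalMax h a t r := by
      constructor
      · intro hm1
        have hne1 : t ⟨(r : ℕ) + 1, hm1⟩ ≠ p.seed j := by
          rw [← hr]
          intro he
          have := congrArg Fin.val (htinj he)
          simp only at this
          omega
        have := p.h_lt_seed hh j (htC _) hne1
        rw [hr]
        exact this
      · intro hr0
        have hne1 : t ⟨(r : ℕ) - 1, lt_of_le_of_lt (Nat.sub_le _ _) r.isLt⟩ ≠ p.seed j := by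
          rw [← hr]
          intro he
          have := congrArg Fin.val (htinj he)
          simp only at this
          omega
        have := p.h_lt_seed hh j (htC _) hne1
        rw [hr]
        exact this
    exact ⟨⟨r, hmaxr, fun m hm => htinj ((claim m hm).trans hr.symm)⟩, claim⟩
end

section
/- Let D be a combinatorial knot diagram (i.e., its strand set S is connected under adjacency) in which the two understrands of every crossing are distinct strands, suppose D is k-meridionally colorable with k ≥ 2 via a sequence of coloring moves with final coloring f : S → {1,…,k}, and let h be the height function of the associated coloring sequence. If c is a crossing with understrands s_p, s_q and overstrand s_r, and f(s_p) = f(s_q), then h(s_r) > min{h(s_p), h(s_q)}. -/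
namespace LinkDiagram

variable {D : LinkDiagram} {k : ℕ}

/-- A strand once colored keeps its color (up to stage `n - k`). -/
lemma ColoringProcess.persist_s3 (p : ColoringProcess D k) :
    ∀ i' ≤ D.n - k, ∀ i ≤ i', ∀ s v, p.f i s = some v → p.f i' s = some v := by
  intro i'
  induction i' with
  | zero =>
    intro _ i hi s v hv
    obtain rfl : i = 0 := Nat.le_zero.mp hi
    exact hv
  | succ n ih =>
    intro hn i hi s v hv
    rcases Nat.lt_or_ge i (n + 1) with hlt | hge
    · have hfn : p.f n s = some v :=
        ih (Nat.le_of_succ_le hn) i (Nat.lt_succ_iff.mp hlt) s v hv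
      have hnm : n < D.n - k := hn
      by_cases hs : s = p.newStrand n
      · rw [hs] at hfn
        rw [p.move_none n hnm] at hfn
        exact absurd hfn (by simp)
      · rw [p.move_eq n hnm s hs]
        exact hfn
    · obtain rfl : i = n + 1 := le_antisymm hi hge
      exact hv

/-- Any strand colored at stage `i` is a seed or one of the earlier new strands. -/
lemma ColoringProcess.origin (p : ColoringProcess D k) :
    ∀ i ≤ D.n - k, ∀ s, (p.f i s).isSome →
      (∃ j, p.seed j = s) ∨ ∃ i' < i, p.newStrand i' = s := by
  intro i
  induction i with
  | zero =>
    intro _ s hs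
    by_cases hseed : ∃ j, p.seed j = s
    · exact Or.inl hseed
    · push_neg at hseed
      rw [p.f0_none s hseed] at hs
      simp at hs
  | succ n ih =>
    intro hn s hs
    by_cases hsn : s = p.newStrand n
    · exact Or.inr ⟨n, Nat.lt_succ_self n, hsn.symm⟩
    · rw [p.move_eq n hn s hsn] at hs
      rcases ih (Nat.le_of_succ_le hn) s hs with hl | ⟨i', hi', he⟩
      · exact Or.inl hl
      · exact Or.inr ⟨i', Nat.lt_succ_of_lt hi', he⟩

/-- The new strand of move `i''` is not yet colored at any earlier stage `i ≤ i''`. -/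
lemma ColoringProcess.newStrand_not_colored (p : ColoringProcess D k)
    {i i'' : ℕ} (h1 : i ≤ i'') (h2 : i'' < D.n - k) :
    ¬ (p.f i (p.newStrand i'')).isSome := by
  intro hsome
  obtain ⟨v, hv⟩ := Option.isSome_iff_exists.mp hsome
  have := p.persist_s3 i'' (le_of_lt h2) i h1 _ v hv
  rw [p.move_none i'' h2] at this
  simp at this

/-- Height of anything colored at stage `i < n - k` is greater than `-(k+i+1)`. -/
lemma ColoringProcess.height_gt (p : ColoringProcess D k)
    {h : D.Strand → ℤ} (hh : IsHeightFunction p h)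
    {i : ℕ} (him : i < D.n - k) {x : D.Strand} (hx : (p.f i x).isSome) :
    -((k : ℤ) + (i : ℕ) + 1) < h x := by
  rcases p.origin i (le_of_lt him) x hx with ⟨j, rfl⟩ | ⟨i'', hi'', rfl⟩
  · rw [hh.1 j]
    have hjk : (j : ℕ) + 1 ≤ k := j.2
    have : ((j : ℕ) : ℤ) + 1 ≤ (k : ℤ) := by exact_mod_cast hjk
    linarith
  · have hi''m : i'' < D.n - k := lt_trans hi'' him
    rw [hh.2 i'' hi''m]
    have : (i'' : ℤ) < (i : ℤ) := by exact_mod_cast hi''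
    linarith

end LinkDiagram

/-- Let `D` be a knot diagram (strand set connected under adjacency)
in which the two understrands of every crossing are distinct, `k`-meridionally
colorable with `k ≥ 2`, with final coloring `p.final'` and height function `h`.
If the two understrands of a crossing `c` get the same final color, then the height of
the overstrand of `c` exceeds the minimum of the heights of the understrands. -/
theorem wirtinger_knot_overstrand_height (D : LinkDiagram)
    (hknot : D.ConnectedIn Set.univ)
    (hdist : ∀ c : D.Crossing, D.under1 c ≠ D.under2 c)
    (k : ℕ) (hk : 2 ≤ k) (p : LinkDiagram.ColoringProcess D k)
    (h : D.Strand → ℤ) (hh : LinkDiagram.IsHeightFunction p h)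
    (c : D.Crossing)
    (hcol : p.final' (D.under1 c) = p.final' (D.under2 c)) :
    min (h (D.under1 c)) (h (D.under2 c)) < h (D.overStrand c) := by
  classical
  choose pc ps hpat hpsi hpov hpeq using p.move_adj
  obtain ⟨j, hj1⟩ := Option.isSome_iff_exists.mp (p.final (D.under1 c))
  have hj2 : p.f (D.n - k) (D.under2 c) = some j := by
    have : p.final' (D.under2 c) = some j := by rw [← hcol]; exact hj1
    exact this
  -- the crossing `c` must be the crossing of some coloring move
  have key : ∃ i, ∃ him : i < D.n - k, pc i him = c := by
    by_contra hno
    push_neg at hno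
    -- color class of `j`
    set T : Finset D.Strand := Finset.univ.filter (fun s => p.f (D.n - k) s = some j)
      with hT
    have hTmem : ∀ s, s ∈ T ↔ p.f (D.n - k) s = some j := by
      intro s; simp [hT]
    have hu1T : D.under1 c ∈ T := (hTmem _).mpr hj1
    have hu2T : D.under2 c ∈ T := (hTmem _).mpr hj2
    set A1 : Finset D.Crossing := Finset.univ.filter (fun cr => D.under1 cr ∈ T) with hA1d
    set A2 : Finset D.Crossing := Finset.univ.filter (fun cr => D.under2 cr ∈ T) with hA2d
    -- degree count
    have hdeg : ∀ s : D.Strand,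
        (Finset.univ.filter (fun cr => D.under1 cr = s)).card
          + (Finset.univ.filter (fun cr => D.under2 cr = s)).card = 2 := by
      intro s
      have h2 := D.under_twice s
      rwa [Nat.card_eq_fintype_card, Nat.card_eq_fintype_card,
        Fintype.card_subtype, Fintype.card_subtype] at h2
    have hA1 : A1.card = ∑ s ∈ T, (Finset.univ.filter (fun cr => D.under1 cr = s)).card := by
      rw [Finset.card_eq_sum_card_fiberwise (f := D.under1) (t := T)
        (fun cr hcr => by simpa [hA1d] using hcr)]
      refine Finset.sum_congr rfl (fun b hb => ?_)
      congr 1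
      ext cr
      simp only [hA1d, Finset.mem_filter, Finset.mem_univ, true_and]
      constructor
      · rintro ⟨-, h2⟩; exact h2
      · intro h2; exact ⟨by rw [h2]; exact hb, h2⟩
    have hA2 : A2.card = ∑ s ∈ T, (Finset.univ.filter (fun cr => D.under2 cr = s)).card := by
      rw [Finset.card_eq_sum_card_fiberwise (f := D.under2) (t := T)
        (fun cr hcr => by simpa [hA2d] using hcr)]
      refine Finset.sum_congr rfl (fun b hb => ?_)
      congr 1
      ext cr
      simp only [hA2d, Finset.mem_filter, Finset.mem_univ, true_and]
      constructor
      · rintro ⟨-, h2⟩; exact h2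
      · intro h2; exact ⟨by rw [h2]; exact hb, h2⟩
    have hsum : A1.card + A2.card = 2 * T.card := by
      rw [hA1, hA2, ← Finset.sum_add_distrib,
        Finset.sum_congr rfl (fun s _ => hdeg s), Finset.sum_const, smul_eq_mul, mul_comm]
    -- injection from T into A1 ∩ A2
    set ψ : D.Strand → D.Crossing := fun s =>
      if hs : ∃ i, ∃ him : i < D.n - k, p.newStrand i = s then
        pc hs.choose hs.choose_spec.choose else c with hψ
    -- if a member of T is not a new strand it is `seed j`
    have seedT : ∀ s ∈ T, (¬ ∃ i, ∃ him : i < D.n - k, p.newStrand i = s) →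
        s = p.seed j := by
      intro s hsT hns
      have hsome : (p.f (D.n - k) s).isSome := by
        rw [(hTmem s).mp hsT]; rfl
      rcases p.origin (D.n - k) le_rfl s hsome with ⟨j₁, rfl⟩ | ⟨i', hi', he⟩
      · have h1 : p.f (D.n - k) (p.seed j₁) = some j₁ :=
          p.persist_s3 (D.n - k) le_rfl 0 (Nat.zero_le _) _ j₁ (p.f0_seed j₁)
        have h2 : some j₁ = some j := by rw [← h1]; exact (hTmem _).mp hsT
        rw [Option.some_inj.mp h2]
      · exact absurd ⟨i', hi', he⟩ hns
    -- the partner strand of a move keeps its color too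
    have hpsT : ∀ i (him : i < D.n - k), p.newStrand i ∈ T → ps i him ∈ T := by
      intro i him hns
      obtain ⟨v, hv⟩ := Option.isSome_iff_exists.mp (hpsi i him)
      have h1 : p.f (i + 1) (p.newStrand i) = some v := by
        rw [hpeq i him, hv]
      have h2 : p.f (D.n - k) (p.newStrand i) = some v :=
        p.persist_s3 (D.n - k) le_rfl (i + 1) him _ v h1
      have h3 : v = j := by
        have := (hTmem _).mp hns
        rw [h2] at this
        exact Option.some_inj.mp this
      refine (hTmem _).mpr ?_
      rw [← h3]
      exact p.persist_s3 (D.n - k) le_rfl i (le_of_lt him) _ v hv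
    have hmaps : ∀ s ∈ T, ψ s ∈ A1 ∩ A2 := by
      intro s hsT
      by_cases hs : ∃ i, ∃ him : i < D.n - k, p.newStrand i = s
      · have hψs : ψ s = pc hs.choose hs.choose_spec.choose := by
          rw [hψ]; simp only [dif_pos hs]
        set i₀ := hs.choose
        have him := hs.choose_spec.choose
        have hne : p.newStrand i₀ = s := hs.choose_spec.choose_spec
        have hnsT : p.newStrand i₀ ∈ T := by rw [hne]; exact hsT
        have hpsT' := hpsT i₀ him hnsT
        rw [hψs]
        rcases hpat i₀ him with ⟨e1, e2⟩ | ⟨e1, e2⟩ <;>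
          · simp only [Finset.mem_inter, hA1d, hA2d, Finset.mem_filter, Finset.mem_univ,
              true_and]
            rw [e1, e2]
            exact ⟨by assumption, by assumption⟩
      · have hψs : ψ s = c := by rw [hψ]; simp only [dif_neg hs]
        rw [hψs]
        simp only [Finset.mem_inter, hA1d, hA2d, Finset.mem_filter, Finset.mem_univ, true_and]
        exact ⟨hu1T, hu2T⟩
    -- the move crossings are pairwise distinct
    have aux : ∀ i (him : i < D.n - k) i' (him' : i' < D.n - k), i < i' →
        pc i him ≠ pc i' him' := by
      intro i him i' him' hlt heq
      -- at stage i', both understrands of pc i him are colored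
      obtain ⟨v, hv⟩ := Option.isSome_iff_exists.mp (hpsi i him)
      have hns : (p.f i' (p.newStrand i)).isSome := by
        have h1 : p.f (i + 1) (p.newStrand i) = some v := by rw [hpeq i him, hv]
        rw [p.persist_s3 i' (le_of_lt him') (i + 1) hlt _ v h1]; rfl
      have hps' : (p.f i' (ps i him)).isSome := by
        rw [p.persist_s3 i' (le_of_lt him') i (le_of_lt hlt) _ v hv]; rfl
      have hn' := p.newStrand_not_colored (le_refl i') him'
      rcases hpat i him with ⟨e1, e2⟩ | ⟨e1, e2⟩ <;>
        rcases hpat i' him' with ⟨g1, g2⟩ | ⟨g1, g2⟩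
      · rw [heq, g1] at e1; rw [e1] at hn'; exact hn' hns
      · rw [heq, g2] at e2; rw [e2] at hn'; exact hn' hps'
      · rw [heq, g1] at e1; rw [e1] at hn'; exact hn' hps'
      · rw [heq, g2] at e2; rw [e2] at hn'; exact hn' hns
    have pcinj : ∀ i (him : i < D.n - k) i' (him' : i' < D.n - k),
        pc i him = pc i' him' → i = i' := by
      intro i him i' him' heq
      rcases Nat.lt_trichotomy i i' with hlt | he | hgt
      · exact absurd heq (aux i him i' him' hlt)
      · exact he
      · exact absurd heq.symm (aux i' him' i him hgt)
    have hinj : Set.InjOn ψ T := by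
      intro s hsT s' hsT' heq
      by_cases hs : ∃ i, ∃ him : i < D.n - k, p.newStrand i = s <;>
        by_cases hs' : ∃ i, ∃ him : i < D.n - k, p.newStrand i = s'
      · have hψs : ψ s = pc hs.choose hs.choose_spec.choose := by
          rw [hψ]; simp only [dif_pos hs]
        have hψs' : ψ s' = pc hs'.choose hs'.choose_spec.choose := by
          rw [hψ]; simp only [dif_pos hs']
        rw [hψs, hψs'] at heq
        have := pcinj _ _ _ _ heq
        rw [← hs.choose_spec.choose_spec, ← hs'.choose_spec.choose_spec, this]
      · have hψs : ψ s = pc hs.choose hs.choose_spec.choose := by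
          rw [hψ]; simp only [dif_pos hs]
        have hψs' : ψ s' = c := by rw [hψ]; simp only [dif_neg hs']
        rw [hψs, hψs'] at heq
        exact absurd heq (hno _ _)
      · have hψs : ψ s = c := by rw [hψ]; simp only [dif_neg hs]
        have hψs' : ψ s' = pc hs'.choose hs'.choose_spec.choose := by
          rw [hψ]; simp only [dif_pos hs']
        rw [hψs, hψs'] at heq
        exact absurd heq.symm (hno _ _)
      · rw [seedT s hsT hs, seedT s' hsT' hs']
    have hcard_le : T.card ≤ (A1 ∩ A2).card :=
      Finset.card_le_card_of_injOn ψ hmaps hinj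
    have hcup : (A1 ∪ A2).card + (A1 ∩ A2).card = A1.card + A2.card :=
      Finset.card_union_add_card_inter A1 A2
    have hsub : A1 ∩ A2 ⊆ A1 ∪ A2 :=
      (Finset.inter_subset_left).trans Finset.subset_union_left
    have hUeq : A1 ∪ A2 = A1 ∩ A2 := by
      have h1 : (A1 ∩ A2).card ≤ (A1 ∪ A2).card := Finset.card_le_card hsub
      have h2 : (A1 ∪ A2).card ≤ (A1 ∩ A2).card := by omega
      exact (Finset.eq_of_subset_of_card_le hsub h2).symm
    -- closure of T under adjacency
    have hclosed : ∀ a b, a ∈ T → D.Adj a b → b ∈ T := by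
      intro a b ha ⟨cr, hcr⟩
      have hcrU : cr ∈ A1 ∪ A2 := by
        rcases hcr with ⟨e1, e2⟩ | ⟨e1, e2⟩
        · exact Finset.mem_union_left _ (by
            simp only [hA1d, Finset.mem_filter, Finset.mem_univ, true_and, e1]; exact ha)
        · exact Finset.mem_union_right _ (by
            simp only [hA2d, Finset.mem_filter, Finset.mem_univ, true_and, e2]; exact ha)
      rw [hUeq] at hcrU
      simp only [Finset.mem_inter, hA1d, hA2d, Finset.mem_filter, Finset.mem_univ,
        true_and] at hcrU
      rcases hcr with ⟨e1, e2⟩ | ⟨e1, e2⟩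
      · rw [← e2]; exact hcrU.2
      · rw [← e1]; exact hcrU.1
    -- connectivity: everything lies in T
    have hall : ∀ t : D.Strand, t ∈ T := by
      intro t
      have hpath := hknot (D.under1 c) trivial t trivial
      induction hpath with
      | refl => exact hu1T
      | tail _ hstep ih => exact hclosed _ _ ih hstep.2.2
    -- but the seeds have distinct colors
    have hseedcol : ∀ x : Fin k, x = j := by
      intro x
      have h1 : p.f (D.n - k) (p.seed x) = some x :=
        p.persist_s3 (D.n - k) le_rfl 0 (Nat.zero_le _) _ x (p.f0_seed x)
      have h2 := (hTmem _).mp (hall (p.seed x))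
      rw [h1] at h2
      exact Option.some_inj.mp h2
    have h0 : (⟨0, by omega⟩ : Fin k) = j := hseedcol _
    have h1 : (⟨1, by omega⟩ : Fin k) = j := hseedcol _
    rw [← h1] at h0
    simp at h0
  -- conclude
  obtain ⟨i, him, hceq⟩ := key
  have hov : (p.f i (D.overStrand c)).isSome := by rw [← hceq]; exact hpov i him
  have hover := p.height_gt hh him hov
  have hns := hh.2 i him
  have hp := hpat i him
  rw [hceq] at hp
  rcases hp with ⟨e1, e2⟩ | ⟨e1, e2⟩
  · have : h (D.under1 c) = -((k : ℤ) + (i : ℕ) + 1) := by rw [e1, hns]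
    calc min (h (D.under1 c)) (h (D.under2 c)) ≤ h (D.under1 c) := min_le_left _ _
      _ < h (D.overStrand c) := by rw [this]; exact hover
  · have : h (D.under2 c) = -((k : ℤ) + (i : ℕ) + 1) := by rw [e2, hns]
    calc min (h (D.under1 c)) (h (D.under2 c)) ≤ h (D.under2 c) := min_le_right _ _
      _ < h (D.overStrand c) := by rw [this]; exact hover
end
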